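/- Let n ≥ 1 and let P, Q be homogeneous elements of degree n of the free Lie algebra L. Then [x,P] + [y,Q] = 0 if and only if there exists a homogeneous element p of degree n+1 of T with γ(p) = 0 such that P = γ(p_x) and Q = γ(p_y), where p = x·p_x + y·p_y is the decomposition of p into its x-part and y-part. -/

import Mathlib

set_option linter.unusedSectionVars false


noncomputable section

open scoped BigOperators

variable (K : Type) [Field K] [CharZero K]

/-- The free associative algebra `T = K⟨x,y⟩`, realized as the monoid algebra of the
free monoid on two generators. -/
abbrev T := MonoidAlgebra K (FreeMonoid (Fin 2))

/-- The word `v₁⋯vₙ` (a list of letters) as an element of `T`. -/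
def word (l : List (Fin 2)) : T K := MonoidAlgebra.single (FreeMonoid.ofList l) 1

/-- The generator `x`. -/
def X : T K := word K [0]

/-- The generator `y`. -/
def Y : T K := word K [1]

/-- Right-nested bracket `[v₁,[v₂,…,[vₙ₋₁,vₙ]…]]` of a word. -/
def brList : List (Fin 2) → T K
  | [] => 0
  | [v] => word K [v]
  | v :: rest => word K [v] * brList rest - brList rest * word K [v]

/-- The Dynkin map `γ : T → T`, sending a word `v₁⋯vₙ` to
`(1/n)[v₁,[v₂,…,[vₙ₋₁,vₙ]…]]` (and `1 ↦ 0`). -/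
def dynkin : T K →ₗ[K] T K :=
  (Finsupp.linearCombination K fun w : FreeMonoid (Fin 2) =>
    ((w.toList.length : K)⁻¹) • brList K w.toList)
    ∘ₗ (MonoidAlgebra.coeffLinearEquiv K).toLinearMap

attribute [local instance] LieRing.ofAssociativeRing

/-- The free Lie algebra `L` on `x, y`, as the Lie subalgebra of `T` generated by `x` and `y`. -/
def L : LieSubalgebra K (T K) := LieSubalgebra.lieSpan K (T K) {X K, Y K}

/-- The degree-`n` homogeneous component `T_n` of `T`, spanned by the words of length `n`. -/
def homog (n : ℕ) : Submodule K (T K) :=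
  Submodule.span K { t | ∃ l : List (Fin 2), l.length = n ∧ t = word K l }

/-- The value `σ(i)` of a permutation of `{0,…,n-1}` on a natural number (junk value `0`
outside the range). -/
def permVal {n : ℕ} (σ : Equiv.Perm (Fin n)) (i : ℕ) : ℕ :=
  if h : i < n then (σ ⟨i, h⟩ : ℕ) else 0

/-- The (0-indexed) descent set of a permutation: positions `i ∈ {0,…,n-2}` with
`σ(i) > σ(i+1)`. -/
def descSet {n : ℕ} (σ : Equiv.Perm (Fin n)) : Finset ℕ :=
  (Finset.range (n - 1)).filter fun i => permVal σ (i + 1) < permVal σ i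

/-- The number of descents of a permutation. -/
def descNum {n : ℕ} (σ : Equiv.Perm (Fin n)) : ℕ := (descSet σ).card

/-- `DSet n k` is the set of permutations of `{0,…,n-1}` whose descent set is exactly
the first `k` positions (this is `D_{1..k}` of the paper, in 0-indexed form). -/
def DSet (n k : ℕ) : Finset (Equiv.Perm (Fin n)) :=
  Finset.univ.filter fun σ => descSet σ = Finset.range k

/-- The Eulerian coefficient `c_σ = (-1)^{d(σ)} (binom (n-1) (d σ))⁻¹`. -/
def eulCoeff {n : ℕ} (σ : Equiv.Perm (Fin n)) : K :=
  (-1 : K) ^ descNum σ * ((Nat.choose (n - 1) (descNum σ) : K))⁻¹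

/-- The degree-`n` Eulerian idempotent applied to the word `w₁⋯wₙ` given by
`v : Fin n → Fin 2`: `eₙ(w) = Σ_σ c_σ w^σ`. -/
def eul (n : ℕ) (v : Fin n → Fin 2) : T K :=
  ∑ σ : Equiv.Perm (Fin n), eulCoeff K σ • word K (List.ofFn fun i => v (σ i))

/-- The `a`-part of an element of `T`: the linear map sending a word `a·w ↦ w` and
any word not starting with the letter `a` (or the empty word) to `0`.  For `p` with zero
constant term, `p = x·(letterPart 0 p) + y·(letterPart 1 p)`. -/
def letterPart (a : Fin 2) : T K →ₗ[K] T K :=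
  (Finsupp.linearCombination K fun w : FreeMonoid (Fin 2) =>
    match w.toList with
    | [] => 0
    | b :: rest => if b = a then word K rest else 0)
    ∘ₗ (MonoidAlgebra.coeffLinearEquiv K).toLinearMap

/-- The algebra endomorphism `s : T → T` with `s(x) = -y`, `s(y) = -x`. -/
def sMap : T K →ₐ[K] T K :=
  MonoidAlgebra.lift K (T K) (FreeMonoid (Fin 2))
    (FreeMonoid.lift fun a : Fin 2 => if a = 0 then -(Y K) else -(X K))


-- ### basic word lemmas

lemma ma_single (w : FreeMonoid (Fin 2)) (c : K) :
    (MonoidAlgebra.single w c : T K) = MonoidAlgebra.ofCoeff (Finsupp.single w c) := rfl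

lemma word_mul_word (l₁ l₂ : List (Fin 2)) : word K l₁ * word K l₂ = word K (l₁ ++ l₂) := by
  simp [word, MonoidAlgebra.single_mul_single, FreeMonoid.ofList_append]

lemma single_eq_smul_word (w : FreeMonoid (Fin 2)) (c : K) :
    (MonoidAlgebra.single w c : T K) = c • word K w.toList := by
  rw [word, FreeMonoid.ofList_toList, MonoidAlgebra.smul_single, smul_eq_mul, mul_one]

-- ### the maps θ, δ, ad, ρ

def theta : T K →ₗ[K] T K :=
  (Finsupp.linearCombination K fun w : FreeMonoid (Fin 2) => brList K w.toList)
    ∘ₗ (MonoidAlgebra.coeffLinearEquiv K).toLinearMap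

def delta : T K →ₗ[K] T K :=
  (Finsupp.linearCombination K fun w : FreeMonoid (Fin 2) =>
    (w.toList.length : K) • word K w.toList)
    ∘ₗ (MonoidAlgebra.coeffLinearEquiv K).toLinearMap

def adL : T K →ₗ[K] Module.End K (T K) :=
  LinearMap.mul K (T K) - (LinearMap.mul K (T K)).flip

lemma adL_apply (w t : T K) : adL K w t = w * t - t * w := rfl

def rho : T K →ₐ[K] Module.End K (T K) :=
  MonoidAlgebra.lift K _ (FreeMonoid (Fin 2))
    (FreeMonoid.lift fun a : Fin 2 => adL K (word K [a]))

lemma theta_word (l : List (Fin 2)) : theta K (word K l) = brList K l := by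
  rw [word, ma_single, theta]
  show Finsupp.linearCombination K _ (Finsupp.single (FreeMonoid.ofList l) 1) = _
  erw [Finsupp.linearCombination_single]
  rw [FreeMonoid.toList_ofList, one_smul]

lemma delta_word (l : List (Fin 2)) : delta K (word K l) = (l.length : K) • word K l := by
  rw [word, ma_single, delta]
  show Finsupp.linearCombination K _ (Finsupp.single (FreeMonoid.ofList l) 1) = _
  erw [Finsupp.linearCombination_single]
  rw [FreeMonoid.toList_ofList, one_smul, word]
  rfl

lemma dynkin_word (l : List (Fin 2)) :
    dynkin K (word K l) = ((l.length : K))⁻¹ • brList K l := by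
  rw [word, ma_single, dynkin]
  show Finsupp.linearCombination K _ (Finsupp.single (FreeMonoid.ofList l) 1) = _
  erw [Finsupp.linearCombination_single]
  rw [FreeMonoid.toList_ofList, one_smul]

lemma rho_letter (a : Fin 2) : rho K (word K [a]) = adL K (word K [a]) := by
  show rho K (MonoidAlgebra.single (FreeMonoid.of a) 1) = _
  rw [rho, MonoidAlgebra.lift_single, one_smul, FreeMonoid.lift_eval_of]

lemma rho_word_cons (a : Fin 2) (l : List (Fin 2)) :
    rho K (word K (a :: l)) = rho K (word K [a]) * rho K (word K l) := by
  rw [← map_mul, word_mul_word, List.singleton_append]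

lemma brList_cons (a : Fin 2) (l : List (Fin 2)) (h : l ≠ []) :
    brList K (a :: l) = word K [a] * brList K l - brList K l * word K [a] := by
  cases l with
  | nil => exact absurd rfl h
  | cons b t => rfl

lemma brList_append (l₁ l₂ : List (Fin 2)) (h : l₂ ≠ []) :
    brList K (l₁ ++ l₂) = rho K (word K l₁) (brList K l₂) := by
  induction l₁ with
  | nil =>
      have h1 : word K ([] : List (Fin 2)) = 1 := rfl
      simp [h1]
  | cons a t ih =>
      have ht : t ++ l₂ ≠ [] := by simp [h]
      rw [List.cons_append, brList_cons K a (t ++ l₂) ht, ih, rho_word_cons, rho_letter]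
      rfl

-- ### the augmentation submodule

def Aug : Submodule K (T K) :=
  Submodule.span K { t | ∃ l : List (Fin 2), l ≠ [] ∧ t = word K l }

lemma homog_le_aug (n : ℕ) (hn : 1 ≤ n) : homog K n ≤ Aug K := by
  apply Submodule.span_mono
  rintro t ⟨l, hl, rfl⟩
  exact ⟨l, by rintro rfl; simp at hl; omega, rfl⟩

lemma theta_mul_word (a : T K) (l : List (Fin 2)) (h : l ≠ []) :
    theta K (a * word K l) = rho K a (brList K l) := by
  induction a using MonoidAlgebra.induction_linear with
  | zero => simp
  | add f g hf hg => rw [add_mul, map_add, hf, hg, map_add]; rfl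
  | single w c =>
      rw [single_eq_smul_word, smul_mul_assoc, map_smul, word_mul_word, theta_word,
        brList_append K _ _ h, map_smul]
      rfl

lemma theta_mul (a b : T K) (hb : b ∈ Aug K) : theta K (a * b) = rho K a (theta K b) := by
  induction hb using Submodule.span_induction with
  | mem t ht =>
      obtain ⟨l, hl, rfl⟩ := ht
      rw [theta_mul_word K a l hl, theta_word]
  | zero => simp
  | add u v hu hv ihu ihv => simp [mul_add, map_add, ihu, ihv]
  | smul c u hu ihu => simp [mul_smul_comm, map_smul, ihu]

lemma delta_word_mul (l₁ l₂ : List (Fin 2)) :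
    delta K (word K l₁ * word K l₂)
      = delta K (word K l₁) * word K l₂ + word K l₁ * delta K (word K l₂) := by
  rw [word_mul_word, delta_word, delta_word, delta_word, smul_mul_assoc, mul_smul_comm,
    word_mul_word, ← add_smul]
  congr 1
  push_cast [List.length_append]
  ring

lemma delta_mul (a b : T K) : delta K (a * b) = delta K a * b + a * delta K b := by
  induction a using MonoidAlgebra.induction_linear with
  | zero => simp
  | add f g hf hg => rw [add_mul, map_add, hf, hg, map_add]; noncomm_ring
  | single w c =>
      induction b using MonoidAlgebra.induction_linear with
      | zero => simp
      | add f g hf hg => rw [mul_add, map_add, hf, hg, map_add]; noncomm_ring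
      | single w' c' =>
          simp only [single_eq_smul_word, map_smul, smul_mul_assoc, mul_smul_comm,
            delta_word_mul, smul_add]

-- ### the Lie subalgebra of good elements

lemma adL_bracket (a b : T K) : adL K ⁅a, b⁆ = ⁅adL K a, adL K b⁆ := by
  refine LinearMap.ext fun t => ?_
  simp only [adL_apply, Ring.lie_def, LinearMap.sub_apply, Module.End.mul_apply, adL_apply]
  noncomm_ring

def goodSet : LieSubalgebra K (T K) where
  carrier := {u | u ∈ Aug K ∧ rho K u = adL K u ∧ theta K u = delta K u}
  add_mem' := by
    rintro a b ⟨ha1, ha2, ha3⟩ ⟨hb1, hb2, hb3⟩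
    exact ⟨add_mem ha1 hb1, by rw [map_add, map_add, ha2, hb2],
      by rw [map_add, map_add, ha3, hb3]⟩
  zero_mem' := ⟨zero_mem _, by simp, by simp⟩
  smul_mem' := by
    rintro c a ⟨ha1, ha2, ha3⟩
    exact ⟨Submodule.smul_mem _ _ ha1, by rw [map_smul, map_smul, ha2],
      by rw [map_smul, map_smul, ha3]⟩
  lie_mem' := by
    rintro a b ⟨ha1, ha2, ha3⟩ ⟨hb1, hb2, hb3⟩
    have hmul : ∀ u v : T K, u ∈ Aug K → v ∈ Aug K → u * v ∈ Aug K := by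
      intro u v hu hv
      induction hu using Submodule.span_induction with
      | mem t ht =>
          induction hv using Submodule.span_induction with
          | mem s hs =>
              obtain ⟨l₁, hl₁, rfl⟩ := ht
              obtain ⟨l₂, hl₂, rfl⟩ := hs
              rw [word_mul_word]
              exact Submodule.subset_span ⟨l₁ ++ l₂, by simp [hl₁], rfl⟩
          | zero => simp
          | add u' v' _ _ ihu ihv => rw [mul_add]; exact add_mem ihu ihv
          | smul c u' _ ihu => rw [mul_smul_comm]; exact Submodule.smul_mem _ _ ihu
      | zero => simp
      | add u' v' _ _ ihu ihv => rw [add_mul]; exact add_mem ihu ihv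
      | smul c u' _ ihu => rw [smul_mul_assoc]; exact Submodule.smul_mem _ _ ihu
    refine ⟨?_, ?_, ?_⟩
    · rw [Ring.lie_def]
      exact sub_mem (hmul _ _ ha1 hb1) (hmul _ _ hb1 ha1)
    · have h1 : rho K ⁅a, b⁆ = ⁅rho K a, rho K b⁆ := by
        rw [Ring.lie_def, Ring.lie_def, map_sub, map_mul, map_mul]
      rw [h1, ha2, hb2, adL_bracket]
    · rw [Ring.lie_def, map_sub, theta_mul K a b hb1, theta_mul K b a ha1, ha2, hb2,
        ha3, hb3, map_sub, delta_mul, delta_mul, adL_apply, adL_apply]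
      noncomm_ring

lemma L_le_good : L K ≤ goodSet K := by
  rw [L, LieSubalgebra.lieSpan_le]
  rintro t (rfl | rfl)
  · refine ⟨Submodule.subset_span ⟨[0], by simp, rfl⟩, rho_letter K 0, ?_⟩
    rw [X, theta_word, delta_word]
    simp [brList]
  · refine ⟨Submodule.subset_span ⟨[1], by simp, rfl⟩, rho_letter K 1, ?_⟩
    rw [Y, theta_word, delta_word]
    simp [brList]

lemma mem_good_theta {u : T K} (h : u ∈ L K) : theta K u = delta K u :=
  (L_le_good K h).2.2

lemma delta_homog {n : ℕ} {u : T K} (hu : u ∈ homog K n) : delta K u = (n : K) • u := by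
  induction hu using Submodule.span_induction with
  | mem t ht => obtain ⟨l, hl, rfl⟩ := ht; rw [delta_word, hl]
  | zero => simp
  | add u v _ _ ihu ihv => rw [map_add, ihu, ihv, smul_add]
  | smul c u _ ihu => rw [map_smul, ihu, smul_comm]

lemma dynkin_homog {n : ℕ} {u : T K} (hu : u ∈ homog K n) :
    dynkin K u = ((n : K))⁻¹ • theta K u := by
  induction hu using Submodule.span_induction with
  | mem t ht => obtain ⟨l, hl, rfl⟩ := ht; rw [dynkin_word, theta_word, hl]
  | zero => simp
  | add u v _ _ ihu ihv => rw [map_add, ihu, ihv, map_add, smul_add]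
  | smul c u _ ihu => rw [map_smul, ihu, map_smul, smul_comm]

lemma theta_homog_eq {n : ℕ} (hn : 1 ≤ n) {u : T K} (hu : u ∈ homog K n) :
    theta K u = (n : K) • dynkin K u := by
  have hne : (n : K) ≠ 0 := Nat.cast_ne_zero.mpr (Nat.one_le_iff_ne_zero.mp hn)
  rw [dynkin_homog K hu, ← smul_assoc, smul_eq_mul, mul_inv_cancel₀ hne, one_smul]

/-- Dynkin–Specht–Wever -/
lemma dsw {n : ℕ} (hn : 1 ≤ n) {u : T K} (hu : u ∈ L K) (hun : u ∈ homog K n) :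
    dynkin K u = u := by
  have hne : (n : K) ≠ 0 := Nat.cast_ne_zero.mpr (Nat.one_le_iff_ne_zero.mp hn)
  rw [dynkin_homog K hun, mem_good_theta K hu, delta_homog K hun, ← smul_assoc, smul_eq_mul,
    inv_mul_cancel₀ hne, one_smul]

lemma lie_nsmul0 (u : T K) (c : K) (v : T K) : ⁅u, c • v⁆ = c • ⁅u, v⁆ := by
  simp [Ring.lie_def, mul_smul_comm, smul_mul_assoc, smul_sub]

-- ### letterPart computations

lemma letterPart_word (a b : Fin 2) (l : List (Fin 2)) :
    letterPart K a (word K (b :: l)) = if b = a then word K l else 0 := by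
  rw [word, ma_single, letterPart]
  show Finsupp.linearCombination K _ (Finsupp.single (FreeMonoid.ofList (b :: l)) 1) = _
  erw [Finsupp.linearCombination_single]
  show (1 : K) • (if b = a then word K l else 0) = _
  rw [one_smul]

lemma theta_homog_bracket {n : ℕ} (hn : 1 ≤ n) {p : T K} (hp : p ∈ homog K (n + 1)) :
    theta K p = ⁅X K, theta K (letterPart K 0 p)⁆ + ⁅Y K, theta K (letterPart K 1 p)⁆ := by
  induction hp using Submodule.span_induction with
  | mem t ht =>
      obtain ⟨l, hl, rfl⟩ := ht
      match l, hl with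
      | a :: rest, hl =>
        have hrest : rest ≠ [] := by
          rintro rfl; simp at hl; omega
        rw [theta_word, brList_cons K a rest hrest, letterPart_word, letterPart_word]
        obtain rfl | rfl : a = 0 ∨ a = 1 := (by decide : ∀ a : Fin 2, a = 0 ∨ a = 1) a
        · rw [if_pos rfl, if_neg (by decide), theta_word, map_zero, lie_zero, add_zero,
            Ring.lie_def, X]
        · rw [if_neg (by decide), if_pos rfl, theta_word, map_zero, lie_zero, zero_add,
            Ring.lie_def, Y]
  | zero => simp
  | add u v _ _ ihu ihv =>
      rw [map_add, ihu, ihv, map_add, map_add, map_add, map_add, lie_add, lie_add]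
      abel
  | smul c u _ ihu =>
      rw [map_smul, ihu, map_smul, map_smul, map_smul, map_smul]
      simp only [Ring.lie_def, smul_sub, smul_add, mul_smul_comm, smul_mul_assoc]

lemma letterPart_homog {n : ℕ} (a : Fin 2) {p : T K} (hp : p ∈ homog K (n + 1)) :
    letterPart K a p ∈ homog K n := by
  induction hp using Submodule.span_induction with
  | mem t ht =>
      obtain ⟨l, hl, rfl⟩ := ht
      match l, hl with
      | b :: rest, hl =>
        rw [letterPart_word]
        split
        · exact Submodule.subset_span ⟨rest, by simpa using hl, rfl⟩
        · exact zero_mem _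
  | zero => simp
  | add u v _ _ ihu ihv => rw [map_add]; exact add_mem ihu ihv
  | smul c u _ ihu => rw [map_smul]; exact Submodule.smul_mem _ _ ihu

lemma mul_letter_homog {n : ℕ} (a : Fin 2) {q : T K} (hq : q ∈ homog K n) :
    word K [a] * q ∈ homog K (n + 1) := by
  induction hq using Submodule.span_induction with
  | mem t ht =>
      obtain ⟨l, hl, rfl⟩ := ht
      rw [word_mul_word]
      exact Submodule.subset_span ⟨a :: l, by simp [hl], rfl⟩
  | zero => simp
  | add u v _ _ ihu ihv => rw [mul_add]; exact add_mem ihu ihv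
  | smul c u _ ihu => rw [mul_smul_comm]; exact Submodule.smul_mem _ _ ihu

lemma letterPart_letter_mul (a b : Fin 2) (q : T K) :
    letterPart K a (word K [b] * q) = if b = a then q else 0 := by
  induction q using MonoidAlgebra.induction_linear with
  | zero => simp
  | add f g hf hg => rw [mul_add, map_add, hf, hg]; split <;> simp
  | single w c =>
      rw [single_eq_smul_word, mul_smul_comm, map_smul, word_mul_word,
        List.singleton_append, letterPart_word]
      split <;> simp [single_eq_smul_word]


/-- Homogeneous Lie elements `P, Q` of degree `n ≥ 1` satisfy `[x,P] + [y,Q] = 0` iff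
there is a homogeneous `p` of degree `n+1` in the kernel of `γ` with `P = γ(p_x)` and
`Q = γ(p_y)`, where `p = x·p_x + y·p_y`. -/
theorem stmt13 (n : ℕ) (hn : 1 ≤ n) (P Q : T K)
    (hPL : P ∈ L K) (hPn : P ∈ homog K n) (hQL : Q ∈ L K) (hQn : Q ∈ homog K n) :
    ⁅X K, P⁆ + ⁅Y K, Q⁆ = 0 ↔
      ∃ p : T K, p ∈ homog K (n + 1) ∧ dynkin K p = 0 ∧
        P = dynkin K (letterPart K 0 p) ∧ Q = dynkin K (letterPart K 1 p) := by
  have hPa : P ∈ Aug K := homog_le_aug K n hn hPn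
  have hQa : Q ∈ Aug K := homog_le_aug K n hn hQn
  have hθP : theta K P = (n : K) • P := by
    rw [mem_good_theta K hPL, delta_homog K hPn]
  have hθQ : theta K Q = (n : K) • Q := by
    rw [mem_good_theta K hQL, delta_homog K hQn]
  have hnK : (n : K) ≠ 0 := Nat.cast_ne_zero.mpr (Nat.one_le_iff_ne_zero.mp hn)
  constructor
  · intro h
    have hp : X K * P + Y K * Q ∈ homog K (n + 1) :=
      add_mem (mul_letter_homog K 0 hPn) (mul_letter_homog K 1 hQn)
    refine ⟨X K * P + Y K * Q, hp, ?_, ?_, ?_⟩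
    · have hθ : theta K (X K * P + Y K * Q) = (n : K) • (⁅X K, P⁆ + ⁅Y K, Q⁆) := by
        rw [map_add, theta_mul K _ _ hPa, theta_mul K _ _ hQa, hθP, hθQ,
          show rho K (X K) = adL K (X K) from rho_letter K 0,
          show rho K (Y K) = adL K (Y K) from rho_letter K 1,
          map_smul, map_smul, ← smul_add]
        simp only [adL_apply, Ring.lie_def]
      rw [dynkin_homog K hp, hθ, h, smul_zero, smul_zero]
    · rw [show X K * P + Y K * Q = word K [0] * P + word K [1] * Q from rfl, map_add,
        letterPart_letter_mul, letterPart_letter_mul, if_pos rfl, if_neg (by decide),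
        add_zero, dsw K hn hPL hPn]
    · rw [show X K * P + Y K * Q = word K [0] * P + word K [1] * Q from rfl, map_add,
        letterPart_letter_mul, letterPart_letter_mul, if_neg (by decide), if_pos rfl,
        zero_add, dsw K hn hQL hQn]
  · rintro ⟨p, hp, hγ, hP, hQ⟩
    have hθp : theta K p = 0 := by
      rw [theta_homog_eq K (by omega) hp, hγ, smul_zero]
    have h0 : letterPart K 0 p ∈ homog K n := letterPart_homog K 0 hp
    have h1 : letterPart K 1 p ∈ homog K n := letterPart_homog K 1 hp
    have hb := theta_homog_bracket K hn hp
    rw [hθp, theta_homog_eq K hn h0, ← hP, theta_homog_eq K hn h1, ← hQ,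
      lie_nsmul0, lie_nsmul0, ← smul_add] at hb
    rcases smul_eq_zero.mp hb.symm with h | h
    · exact absurd h hnK
    · exact h

end
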